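/- Let Γ be a finite graph with clique number r whose automorphism group acts primitively on the vertices. Suppose there are distinct vertices a, b such that every clique of size r containing a also contains b. Then Γ is a complete graph. -/

import Mathlib

def IsPrimitivePermGroup {X : Type*} (G : Subgroup (Equiv.Perm X)) : Prop :=
  (∀ x y : X, ∃ g ∈ G, g x = y) ∧
  ∀ R : X → X → Prop, Equivalence R →
    (∀ g ∈ G, ∀ x y : X, R x y → R (g x) (g y)) →
    (∀ x y : X, R x y ↔ x = y) ∨ (∀ x y : X, R x y)

theorem stmt2 {X : Type*} [Fintype X] (Γ : SimpleGraph X) (r : ℕ)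
    (G : Subgroup (Equiv.Perm X))
    (hAut : ∀ g ∈ G, ∀ x y : X, Γ.Adj x y ↔ Γ.Adj (g x) (g y))
    (hPrim : IsPrimitivePermGroup G)
    (hclique : Γ.cliqueNum = r)
    (a b : X) (hab : a ≠ b)
    (h : ∀ s : Finset X, Γ.IsNClique r s → a ∈ s → b ∈ s) :
    ∀ x y : X, x ≠ y → Γ.Adj x y := by
  classical
  -- the quasiorder
  set Q : X → X → Prop := fun x y => ∀ s : Finset X, Γ.IsNClique r s → x ∈ s → y ∈ s with hQ
  -- invariance of Q under G
  have hmap : ∀ g ∈ G, ∀ s : Finset X, Γ.IsNClique r s → Γ.IsNClique r (s.image g) := by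
    intro g hg s hs
    constructor
    · intro x hx y hy hxy
      simp only [Finset.coe_image, Set.mem_image] at hx hy
      obtain ⟨x', hx', rfl⟩ := hx
      obtain ⟨y', hy', rfl⟩ := hy
      exact (hAut g hg x' y').mp (hs.1 hx' hy' (fun e => hxy (by rw [e])))
    · rw [Finset.card_image_of_injective _ g.injective, hs.2]
  have hQinv : ∀ g ∈ G, ∀ x y : X, Q x y → Q (g x) (g y) := by
    intro g hg x y hxy s hs hgx
    have hs' : Γ.IsNClique r (s.image (⇑(g⁻¹ : Equiv.Perm X))) := hmap g⁻¹ (inv_mem hg) s hs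
    have hx : x ∈ s.image (⇑(g⁻¹ : Equiv.Perm X)) := by
      simp only [Finset.mem_image]
      exact ⟨g x, hgx, g.symm_apply_apply x⟩
    have := hxy _ hs' hx
    simp only [Finset.mem_image] at this
    obtain ⟨z, hz, hz'⟩ := this
    have hzy : z = g y := by
      have := congrArg g hz'
      simpa [Equiv.apply_symm_apply] using this
    exact hzy ▸ hz
  have hQtrans : ∀ {x y z}, Q x y → Q y z → Q x z := by
    intro x y z h1 h2 s hs hx
    exact h2 s hs (h1 s hs hx)
  -- symmetry of Q from transitivity of the action
  have hQsymm : ∀ x y : X, Q x y → Q y x := by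
    intro x y hxy
    obtain ⟨g, hg, hgx⟩ := hPrim.1 x y
    subst hgx
    -- x → g x, hence g^k x → g^(k+1) x, hence g x → g^m x = x
    have step : ∀ k : ℕ, Q ((g ^ k) x) ((g ^ (k + 1)) x) := by
      intro k
      have := hQinv (g ^ k) (pow_mem hg k) x (g x) hxy
      simpa [pow_succ, Equiv.Perm.mul_apply] using this
    have chain : ∀ k : ℕ, Q (g x) ((g ^ (k + 1)) x) := by
      intro k
      induction k with
      | zero => intro s hs hx; simpa using hx
      | succ n ih => exact hQtrans ih (step (n + 1))
    have hord : (g ^ orderOf g) x = x := by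
      rw [pow_orderOf_eq_one]; rfl
    have hpos : 0 < orderOf g := orderOf_pos g
    have := chain (orderOf g - 1)
    rwa [Nat.sub_add_cancel hpos, hord] at this
  -- the equivalence relation
  set R : X → X → Prop := fun x y => Q x y ∧ Q y x with hR
  have hReq : Equivalence R := by
    constructor
    · exact fun x => ⟨fun s hs hx => hx, fun s hs hx => hx⟩
    · exact fun ⟨h1, h2⟩ => ⟨h2, h1⟩
    · exact fun ⟨h1, h2⟩ ⟨h3, h4⟩ => ⟨hQtrans h1 h3, hQtrans h4 h2⟩
  have hRinv : ∀ g ∈ G, ∀ x y : X, R x y → R (g x) (g y) :=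
    fun g hg x y ⟨h1, h2⟩ => ⟨hQinv g hg x y h1, hQinv g hg y x h2⟩
  have hRab : R a b := ⟨h, hQsymm a b h⟩
  rcases hPrim.2 R hReq hRinv with htriv | huniv
  · exact absurd ((htriv a b).mp hRab) hab
  -- now every vertex is in every r-clique
  obtain ⟨s, hs⟩ := Γ.exists_isNClique_cliqueNum
  rw [hclique] at hs
  have hr1 : 1 ≤ r := by
    rw [← hclique]
    have h1 : Γ.IsNClique 1 {a} := by simp [SimpleGraph.isNClique_singleton]
    have := h1.isClique.card_le_cliqueNum
    simpa using this
  have hsne : s.Nonempty := by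
    rw [← Finset.card_pos, hs.2]; omega
  obtain ⟨x0, hx0⟩ := hsne
  intro x y hxy
  have hx : x ∈ s := (huniv x0 x).1 s hs hx0
  have hy : y ∈ s := (huniv x0 y).1 s hs hx0
  exact hs.1 hx hy hxy
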